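/- With the data and definitions of the preceding base-case statement (A, B⁰, B¹, S positive semidefinite, s, s̃, c_i, C_i⁰, C_i¹, D symmetric, E positive definite, d, e, d̃, the function J(x,u,w), H = E + (B⁰)ᵀSB⁰ + Σ_i (C_i⁰)ᵀSC_i⁰, and I•, L, M⁰), define s̃' = d̃ + s̃ + Σ_i c_iᵀS c_i - I•ᵀH I•, s' = d + Aᵀs - LᵀH I•, S' = D + AᵀSA - LᵀHL, r' = (B¹)ᵀs + Σ_i (C_i¹)ᵀS c_i - (M⁰)ᵀH I•, R̃' = AᵀSB¹ - LᵀH M⁰, and R' = (B¹)ᵀSB¹ + Σ_i (C_i¹)ᵀS C_i¹ - (M⁰)ᵀH M⁰. Then for every x ∈ ℝⁿ and w ∈ ℝ^d, with u* = I• + Lx + M⁰w, one has J(x, u*, w) = s̃' + 2xᵀs' + xᵀS'x + 2wᵀr' + 2xᵀR̃'w + wᵀR'w. -/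

import Mathlib

open Matrix

lemma dotT {m k : ℕ} (M : Matrix (Fin m) (Fin k) ℝ) (a : Fin k → ℝ) (b : Fin m → ℝ) :
    a ⬝ᵥ (Mᵀ *ᵥ b) = (M *ᵥ a) ⬝ᵥ b := by
  rw [Matrix.dotProduct_mulVec, Matrix.vecMul_transpose]

lemma swapSym {m : ℕ} (S : Matrix (Fin m) (Fin m) ℝ) (hS : Sᵀ = S) (a b : Fin m → ℝ) :
    a ⬝ᵥ (S *ᵥ b) = b ⬝ᵥ (S *ᵥ a) := by
  conv_lhs => rw [← hS]
  rw [dotT, dotProduct_comm]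

lemma quad2 {m : ℕ} (S : Matrix (Fin m) (Fin m) ℝ) (hS : Sᵀ = S) (a b : Fin m → ℝ) :
    (a + b) ⬝ᵥ (S *ᵥ (a + b)) =
      a ⬝ᵥ (S *ᵥ a) + 2 * (b ⬝ᵥ (S *ᵥ a)) + b ⬝ᵥ (S *ᵥ b) := by
  have h := swapSym S hS a b
  simp only [Matrix.mulVec_add, dotProduct_add, add_dotProduct]
  linarith

lemma quad3 {m : ℕ} (M : Matrix (Fin m) (Fin m) ℝ) (hM : Mᵀ = M) (a b c : Fin m → ℝ) :
    (a + b + c) ⬝ᵥ (M *ᵥ (a + b + c)) =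
      a ⬝ᵥ (M *ᵥ a) + 2 * (b ⬝ᵥ (M *ᵥ a)) + 2 * (c ⬝ᵥ (M *ᵥ a))
        + b ⬝ᵥ (M *ᵥ b) + 2 * (b ⬝ᵥ (M *ᵥ c)) + c ⬝ᵥ (M *ᵥ c) := by
  have h1 := swapSym M hM a b
  have h2 := swapSym M hM a c
  have h3 := swapSym M hM c b
  simp only [Matrix.mulVec_add, dotProduct_add, add_dotProduct]
  linarith

lemma posSemidef_sum {p m : ℕ} (f : Fin p → Matrix (Fin m) (Fin m) ℝ)
    (h : ∀ i, (f i).PosSemidef) : (∑ i, f i).PosSemidef := by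
  refine Finset.sum_induction f Matrix.PosSemidef ?_ ?_ ?_
  · exact fun a b ha hb => ha.add hb
  · exact Matrix.PosSemidef.zero
  · exact fun i _ => h i

lemma sum_mulVec' {m k p : ℕ} (M : Fin p → Matrix (Fin m) (Fin k) ℝ) (v : Fin k → ℝ) :
    (∑ i, M i) *ᵥ v = ∑ i, M i *ᵥ v := by
  ext j
  simp only [Matrix.mulVec, dotProduct, Finset.sum_apply, Finset.sum_mul,
    Matrix.sum_apply]
  rw [Finset.sum_comm]

lemma dot_sum {m p : ℕ} (a : Fin m → ℝ) (f : Fin p → Fin m → ℝ) :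
    a ⬝ᵥ (∑ i, f i) = ∑ i, a ⬝ᵥ f i := by
  simp only [dotProduct, Finset.sum_apply, Finset.mul_sum]
  rw [Finset.sum_comm]

theorem base_case_cost_update {n d p : ℕ}
    (A : Matrix (Fin n) (Fin n) ℝ) (B0 B1 : Matrix (Fin n) (Fin d) ℝ)
    (S : Matrix (Fin n) (Fin n) ℝ) (hS : S.PosSemidef)
    (svec : Fin n → ℝ) (stil : ℝ)
    (c : Fin p → Fin n → ℝ) (C0 C1 : Fin p → Matrix (Fin n) (Fin d) ℝ)
    (D : Matrix (Fin n) (Fin n) ℝ) (hD : D.IsSymm)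
    (E : Matrix (Fin d) (Fin d) ℝ) (hE : E.PosDef)
    (dvec : Fin n → ℝ) (evec : Fin d → ℝ) (dtil : ℝ) :
    let J : (Fin n → ℝ) → (Fin d → ℝ) → (Fin d → ℝ) → ℝ := fun x u w =>
      dtil + 2 * (x ⬝ᵥ dvec) + x ⬝ᵥ (D *ᵥ x) + 2 * (u ⬝ᵥ evec) + u ⬝ᵥ (E *ᵥ u)
        + stil + 2 * ((A *ᵥ x + B0 *ᵥ u + B1 *ᵥ w) ⬝ᵥ svec)
        + (A *ᵥ x + B0 *ᵥ u + B1 *ᵥ w) ⬝ᵥ (S *ᵥ (A *ᵥ x + B0 *ᵥ u + B1 *ᵥ w))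
        + ∑ i : Fin p, (c i + C0 i *ᵥ u + C1 i *ᵥ w) ⬝ᵥ
            (S *ᵥ (c i + C0 i *ᵥ u + C1 i *ᵥ w))
    let H := E + B0ᵀ * S * B0 + ∑ i : Fin p, (C0 i)ᵀ * S * C0 i
    let Istar : Fin d → ℝ :=
      -(H⁻¹ *ᵥ (evec + B0ᵀ *ᵥ svec + ∑ i : Fin p, (C0 i)ᵀ *ᵥ (S *ᵥ c i)))
    let L := -(H⁻¹ * B0ᵀ * S * A)
    let M0 := -(H⁻¹ * (B0ᵀ * S * B1 + ∑ i : Fin p, (C0 i)ᵀ * S * C1 i))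
    let stil' : ℝ := dtil + stil + (∑ i : Fin p, c i ⬝ᵥ (S *ᵥ c i))
      - Istar ⬝ᵥ (H *ᵥ Istar)
    let svec' : Fin n → ℝ := dvec + Aᵀ *ᵥ svec - Lᵀ *ᵥ (H *ᵥ Istar)
    let S' := D + Aᵀ * S * A - Lᵀ * H * L
    let r' : Fin d → ℝ := B1ᵀ *ᵥ svec + (∑ i : Fin p, (C1 i)ᵀ *ᵥ (S *ᵥ c i))
      - M0ᵀ *ᵥ (H *ᵥ Istar)
    let Rt' := Aᵀ * S * B1 - Lᵀ * H * M0
    let R' := B1ᵀ * S * B1 + (∑ i : Fin p, (C1 i)ᵀ * S * C1 i) - M0ᵀ * H * M0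
    ∀ (x : Fin n → ℝ) (w : Fin d → ℝ),
      J x (Istar + L *ᵥ x + M0 *ᵥ w) w =
        stil' + 2 * (x ⬝ᵥ svec') + x ⬝ᵥ (S' *ᵥ x) + 2 * (w ⬝ᵥ r')
          + 2 * (x ⬝ᵥ (Rt' *ᵥ w)) + w ⬝ᵥ (R' *ᵥ w) := by
  intro J H Istar L M0 stil' svec' S' r' Rt' R' x w
  -- symmetry of S
  have hSsym : Sᵀ = S := by
    rw [← Matrix.conjTranspose_eq_transpose_of_trivial]; exact hS.isHermitian
  -- H is positive definite
  have h1 : (B0ᵀ * S * B0).PosSemidef := by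
    have := hS.conjTranspose_mul_mul_same B0
    rwa [Matrix.conjTranspose_eq_transpose_of_trivial] at this
  have h2 : (∑ i : Fin p, (C0 i)ᵀ * S * C0 i).PosSemidef := by
    refine _root_.posSemidef_sum _ fun i => ?_
    have := hS.conjTranspose_mul_mul_same (C0 i)
    rwa [Matrix.conjTranspose_eq_transpose_of_trivial] at this
  have hHpd : H.PosDef := (hE.add_posSemidef h1).add_posSemidef h2
  have hHsym : Hᵀ = H := by
    rw [← Matrix.conjTranspose_eq_transpose_of_trivial]; exact hHpd.isHermitian
  have hHinv : H * H⁻¹ = 1 :=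
    Matrix.mul_nonsing_inv H ((Matrix.isUnit_iff_isUnit_det H).mp hHpd.isUnit)
  -- key identities for the optimal control
  have hHI : H *ᵥ Istar
      = -(evec + B0ᵀ *ᵥ svec + ∑ i : Fin p, (C0 i)ᵀ *ᵥ (S *ᵥ c i)) := by
    show H *ᵥ (-(H⁻¹ *ᵥ _)) = _
    rw [Matrix.mulVec_neg, Matrix.mulVec_mulVec, hHinv, Matrix.one_mulVec]
  have hHL : H * L = -(B0ᵀ * S * A) := by
    show H * -(H⁻¹ * B0ᵀ * S * A) = _
    rw [Matrix.mul_neg, ← Matrix.mul_assoc, ← Matrix.mul_assoc, ← Matrix.mul_assoc,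
      hHinv, Matrix.one_mul]
  have hHM : H * M0 = -(B0ᵀ * S * B1 + ∑ i : Fin p, (C0 i)ᵀ * S * C1 i) := by
    show H * -(H⁻¹ * _) = _
    rw [Matrix.mul_neg, ← Matrix.mul_assoc, hHinv, Matrix.one_mul]
  set u : Fin d → ℝ := Istar + L *ᵥ x + M0 *ᵥ w with hu
  set tvec : Fin d → ℝ :=
    (evec + B0ᵀ *ᵥ svec + ∑ i : Fin p, (C0 i)ᵀ *ᵥ (S *ᵥ c i))
      + (B0ᵀ * S * A) *ᵥ x
      + (B0ᵀ * S * B1 + ∑ i : Fin p, (C0 i)ᵀ * S * C1 i) *ᵥ w with htvec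
  have key : tvec = -(H *ᵥ u) := by
    rw [hu, Matrix.mulVec_add, Matrix.mulVec_add, hHI, Matrix.mulVec_mulVec,
      Matrix.mulVec_mulVec, hHL, hHM, htvec, Matrix.neg_mulVec, Matrix.neg_mulVec]
    abel
  set F : ℝ := dtil + 2 * (x ⬝ᵥ dvec) + x ⬝ᵥ (D *ᵥ x) + stil
      + 2 * ((A *ᵥ x) ⬝ᵥ svec) + 2 * ((B1 *ᵥ w) ⬝ᵥ svec)
      + (A *ᵥ x) ⬝ᵥ (S *ᵥ (A *ᵥ x)) + 2 * ((B1 *ᵥ w) ⬝ᵥ (S *ᵥ (A *ᵥ x)))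
      + (B1 *ᵥ w) ⬝ᵥ (S *ᵥ (B1 *ᵥ w))
      + ∑ i : Fin p, (c i ⬝ᵥ (S *ᵥ c i) + 2 * ((C1 i *ᵥ w) ⬝ᵥ (S *ᵥ c i))
          + (C1 i *ᵥ w) ⬝ᵥ (S *ᵥ (C1 i *ᵥ w))) with hF
  have eJ : J x u w =
      dtil + 2 * (x ⬝ᵥ dvec) + x ⬝ᵥ (D *ᵥ x) + 2 * (u ⬝ᵥ evec) + u ⬝ᵥ (E *ᵥ u)
        + stil + 2 * ((A *ᵥ x + B0 *ᵥ u + B1 *ᵥ w) ⬝ᵥ svec)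
        + (A *ᵥ x + B0 *ᵥ u + B1 *ᵥ w) ⬝ᵥ (S *ᵥ (A *ᵥ x + B0 *ᵥ u + B1 *ᵥ w))
        + ∑ i : Fin p, (c i + C0 i *ᵥ u + C1 i *ᵥ w) ⬝ᵥ
            (S *ᵥ (c i + C0 i *ᵥ u + C1 i *ᵥ w)) := rfl
  have hHdef : H = E + B0ᵀ * S * B0 + ∑ i : Fin p, (C0 i)ᵀ * S * C0 i := rfl
  have haveL : J x u w = F + 2 * (u ⬝ᵥ tvec) + u ⬝ᵥ (H *ᵥ u) := by
    have hre : A *ᵥ x + B0 *ᵥ u + B1 *ᵥ w = A *ᵥ x + B1 *ᵥ w + B0 *ᵥ u := by abel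
    have hre2 : ∀ i : Fin p,
        c i + C0 i *ᵥ u + C1 i *ᵥ w = c i + C1 i *ᵥ w + C0 i *ᵥ u := fun i => by abel
    have hq1 := quad2 S hSsym (A *ᵥ x + B1 *ᵥ w) (B0 *ᵥ u)
    have hq2 := quad2 S hSsym (A *ᵥ x) (B1 *ᵥ w)
    have hq3 := fun i : Fin p => quad2 S hSsym (c i + C1 i *ᵥ w) (C0 i *ᵥ u)
    have hq4 := fun i : Fin p => quad2 S hSsym (c i) (C1 i *ᵥ w)
    rw [eJ, hre, hq1, hq2, htvec, hF, hHdef]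
    simp only [hre2, hq3]
    simp only [hq4]
    simp only [Matrix.add_mulVec, sum_mulVec', Matrix.mulVec_add, dotProduct_add,
      add_dotProduct, dot_sum, ← Matrix.mulVec_mulVec, dotT, two_mul, mul_add,
      add_mul, Finset.sum_add_distrib, Finset.mul_sum, Finset.sum_mul]
    ring
  have haveR : stil' + 2 * (x ⬝ᵥ svec') + x ⬝ᵥ (S' *ᵥ x) + 2 * (w ⬝ᵥ r')
      + 2 * (x ⬝ᵥ (Rt' *ᵥ w)) + w ⬝ᵥ (R' *ᵥ w) = F - u ⬝ᵥ (H *ᵥ u) := by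
    have e1 : stil' = dtil + stil + (∑ i : Fin p, c i ⬝ᵥ (S *ᵥ c i))
        - Istar ⬝ᵥ (H *ᵥ Istar) := rfl
    have e2 : svec' = dvec + Aᵀ *ᵥ svec - Lᵀ *ᵥ (H *ᵥ Istar) := rfl
    have e3 : S' = D + Aᵀ * S * A - Lᵀ * H * L := rfl
    have e4 : r' = B1ᵀ *ᵥ svec + (∑ i : Fin p, (C1 i)ᵀ *ᵥ (S *ᵥ c i))
        - M0ᵀ *ᵥ (H *ᵥ Istar) := rfl
    have e5 : Rt' = Aᵀ * S * B1 - Lᵀ * H * M0 := rfl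
    have e6 : R' = B1ᵀ * S * B1 + (∑ i : Fin p, (C1 i)ᵀ * S * C1 i) - M0ᵀ * H * M0 := rfl
    have hq5 := quad3 H hHsym Istar (L *ᵥ x) (M0 *ᵥ w)
    rw [e1, e2, e3, e4, e5, e6, hF, hu, hq5]
    simp only [Matrix.sub_mulVec, Matrix.add_mulVec, sum_mulVec', Matrix.mulVec_add,
      dotProduct_add, add_dotProduct, dotProduct_sub,
      sub_dotProduct, dot_sum, ← Matrix.mulVec_mulVec, dotT, two_mul, mul_add,
      add_mul, Finset.sum_add_distrib, Finset.mul_sum, Finset.sum_mul]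
    rw [swapSym S hSsym (A *ᵥ x) (B1 *ᵥ w)]
    ring
  rw [haveL, haveR, key, dotProduct_neg]
  ring
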